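/- The block Wiedemann evaluation strategy using checkpoints performs (1 + n/m + 1/n)·N sparse matrix-vector products in total: the sequence step requires n·(⌈N/m⌉ + ⌈N/n⌉) ≈ (1 + n/m)·N products, and the solution step with stored checkpoints M₀^{Kj}y requires only deg F ≈ N/n additional products. In particular, as m/n → ∞ and n → ∞ with m ≫ n, the total count (1 + n/m + 1/n)·N tends to N. -/

import Mathlib

open Filter

/-- Operation count of the checkpointed block Wiedemann evaluation strategy:
the sequence step costs `n·(N/m + N/n) = (1 + n/m)·N` SpMVs, the solution step
adds `N/n` more for a total `(1 + n/m + 1/n)·N`, and as `n → ∞` with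
`m/n → ∞` this total tends to `N`. -/
theorem block_wiedemann_spmv_count (N : ℝ) :
    (∀ m n : ℝ, 0 < m → 0 < n →
      n * (N / m + N / n) = (1 + n / m) * N ∧
      (1 + n / m) * N + N / n = (1 + n / m + 1 / n) * N) ∧
    (∀ m n : ℕ → ℝ,
      Tendsto (fun k => m k / n k) atTop atTop →
      Tendsto n atTop atTop →
      Tendsto (fun k => (1 + n k / m k + 1 / n k) * N) atTop (nhds N)) := by
  constructor
  · intro m n hm hn
    constructor
    · field_simp
      ring
    · ring
  · intro m n hmn hn
    have h1 : Tendsto (fun k => n k / m k) atTop (nhds 0) := by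
      have h := hmn.inv_tendsto_atTop
      have : (fun k => n k / m k) = fun k => (m k / n k)⁻¹ := by
        funext k; rw [inv_div]
      rw [this]; exact h
    have h2 : Tendsto (fun k => 1 / n k) atTop (nhds 0) := by
      simp only [one_div]; exact hn.inv_tendsto_atTop
    have h3 : Tendsto (fun k => 1 + n k / m k + 1 / n k) atTop (nhds 1) := by
      have := ((tendsto_const_nhds (x := (1:ℝ))).add h1).add h2
      simpa using this
    have := h3.mul_const N
    simpa using this
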